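/- Let θ be a solution of the Kuramoto system of identical oscillators and suppose z(t) ≠ 0 at some time t. Then R is differentiable at t and Ṙ(t) = R(t) · (1/N)∑_{j=1}^N sin²(θ_j(t) − φ(t)). -/

import Mathlib

open Filter Real Complex

/-- For a solution of the Kuramoto system of identical oscillators, with order parameters
`z(t) = (1/N) ∑_j e^{iθ_j(t)}`, `R(t) = |z(t)|`, `φ(t) = arg z(t)`: if `z(t) ≠ 0` then
`R` is differentiable at `t` with `Ṙ(t) = R(t) · (1/N) ∑_j sin²(θ_j(t) - φ(t))`. -/
theorem kuramoto_R_derivative (N : ℕ) (hN : 0 < N) (θ : Fin N → ℝ → ℝ)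
    (hode : ∀ i, ∀ t ≥ (0:ℝ),
      HasDerivAt (θ i) (-(1 / (N:ℝ)) * ∑ j : Fin N, Real.sin (θ i t - θ j t)) t)
    (z : ℝ → ℂ)
    (hz : ∀ t, z t = (1 / (N:ℝ)) * ∑ j : Fin N, Complex.exp (Complex.I * (θ j t : ℂ)))
    (t : ℝ) (ht : 0 ≤ t) (hzt : z t ≠ 0) :
    HasDerivAt (fun s => ‖z s‖)
      (‖z t‖ *
        ((1 / (N:ℝ)) * ∑ j : Fin N, (Real.sin (θ j t - (z t).arg))^2)) t := by
  classical
  set d : Fin N → ℝ := fun j => -(1 / (N:ℝ)) * ∑ k : Fin N, Real.sin (θ j t - θ k t) with hd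
  set W : ℂ := ((1 / (N:ℝ)) : ℂ) * ∑ j : Fin N,
      Complex.I * (d j : ℂ) * Complex.exp (Complex.I * (θ j t : ℂ)) with hW
  have hzd : HasDerivAt z W t := by
    have h : ∀ j : Fin N, HasDerivAt (fun s => Complex.exp (Complex.I * (θ j s : ℂ)))
        (Complex.I * (d j : ℂ) * Complex.exp (Complex.I * (θ j t : ℂ))) t := by
      intro j
      have h1 : HasDerivAt (fun s => ((θ j s : ℝ) : ℂ)) ((d j : ℝ) : ℂ) t :=
        (hode j t ht).ofReal_comp
      have h2 := (h1.const_mul Complex.I).cexp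
      convert h2 using 1
      ring
    have hsum := HasDerivAt.sum (fun j (_ : j ∈ Finset.univ) => h j)
    have h3 := hsum.const_mul (((1 / (N:ℝ)) : ℂ))
    have hzf : z = fun s => ((1 / (N:ℝ)) : ℂ) * ∑ j : Fin N,
        Complex.exp (Complex.I * (θ j s : ℂ)) := funext hz
    rw [hzf, hW]
    simpa only [Finset.sum_apply] using h3
  set a : ℝ := (z t).re with haa
  set b : ℝ := (z t).im with hbb
  set R : ℝ := ‖z t‖ with hR
  have hRpos : 0 < R := by
    rw [hR]; exact norm_pos_iff.mpr hzt
  have hNne : (N:ℝ) ≠ 0 := Nat.cast_ne_zero.mpr hN.ne'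
  -- formulas for a, b
  have ha : a = (1 / (N:ℝ)) * ∑ j : Fin N, Real.cos (θ j t) := by
    rw [haa, hz]
    simp [Complex.mul_re, Complex.re_sum, Complex.im_sum, Complex.exp_re, Complex.exp_im,
      Complex.mul_im, Complex.I_re, Complex.I_im]
  have hb : b = (1 / (N:ℝ)) * ∑ j : Fin N, Real.sin (θ j t) := by
    rw [hbb, hz]
    simp [Complex.mul_re, Complex.re_sum, Complex.im_sum, Complex.exp_re, Complex.exp_im,
      Complex.mul_im, Complex.I_re, Complex.I_im]
  -- formula for d j
  have hdj : ∀ j, d j = -(a * Real.sin (θ j t) - b * Real.cos (θ j t)) := by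
    intro j
    rw [hd, ha, hb]
    simp only [Real.sin_sub]
    rw [Finset.sum_sub_distrib]
    rw [show ∑ x : Fin N, Real.sin (θ j t) * Real.cos (θ x t)
        = Real.sin (θ j t) * ∑ x : Fin N, Real.cos (θ x t) from (Finset.mul_sum _ _ _).symm]
    rw [show ∑ x : Fin N, Real.cos (θ j t) * Real.sin (θ x t)
        = Real.cos (θ j t) * ∑ x : Fin N, Real.sin (θ x t) from (Finset.mul_sum _ _ _).symm]
    ring
  -- W.re, W.im
  have hWre : W.re = (1 / (N:ℝ)) * ∑ j : Fin N, -(d j * Real.sin (θ j t)) := by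
    rw [hW]
    simp [Complex.mul_re, Complex.re_sum, Complex.im_sum, Complex.exp_re, Complex.exp_im,
      Complex.mul_im, Complex.I_re, Complex.I_im, Finset.mul_sum]
  have hWim : W.im = (1 / (N:ℝ)) * ∑ j : Fin N, d j * Real.cos (θ j t) := by
    rw [hW]
    simp [Complex.mul_re, Complex.re_sum, Complex.im_sum, Complex.exp_re, Complex.exp_im,
      Complex.mul_im, Complex.I_re, Complex.I_im, Finset.mul_sum]
  -- real and imaginary parts of z are differentiable
  have hu : HasDerivAt (fun s => (z s).re) W.re t :=
    (Complex.reCLM.hasFDerivAt.comp_hasDerivAt t hzd)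
  have hv : HasDerivAt (fun s => (z s).im) W.im t :=
    (Complex.imCLM.hasFDerivAt.comp_hasDerivAt t hzd)
  have hg : HasDerivAt (fun s => (z s).re * (z s).re + (z s).im * (z s).im)
      (W.re * a + a * W.re + (W.im * b + b * W.im)) t := (hu.mul hu).add (hv.mul hv)
  have hgt : a * a + b * b ≠ 0 := by
    have : Complex.normSq (z t) ≠ 0 := (Complex.normSq_pos.mpr hzt).ne'
    simpa [Complex.normSq_apply, haa, hbb] using this
  have hsqrt := Real.hasDerivAt_sqrt hgt
  have hcomp := hsqrt.comp t hg
  have hfun : (fun s => ‖z s‖) =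
      (Real.sqrt ∘ fun s => (z s).re * (z s).re + (z s).im * (z s).im) := by
    funext s
    simp [Complex.norm_def, Complex.normSq_apply]
  rw [hfun]
  refine hcomp.congr_deriv ?_
  symm
  -- value equality
  have hsab : Real.sqrt (a * a + b * b) = R := by
    rw [hR, Complex.norm_def, Complex.normSq_apply, haa, hbb]
  have hsin : ∀ j, Real.sin (θ j t - (z t).arg) = (a * Real.sin (θ j t) - b * Real.cos (θ j t)) / R := by
    intro j
    rw [Real.sin_sub, Complex.cos_arg hzt, Complex.sin_arg, ← haa, ← hbb, ← hR]
    field_simp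
  have key : a * W.re + b * W.im =
      (1 / (N:ℝ)) * ∑ j : Fin N, (a * Real.sin (θ j t) - b * Real.cos (θ j t))^2 := by
    have h1 : ∑ j : Fin N, (a * Real.sin (θ j t) - b * Real.cos (θ j t))^2
        = ∑ j : Fin N, (a * -(d j * Real.sin (θ j t)) + b * (d j * Real.cos (θ j t))) := by
      apply Finset.sum_congr rfl
      intro j _
      rw [hdj j]
      ring
    rw [hWre, hWim, h1, Finset.sum_add_distrib, ← Finset.mul_sum, ← Finset.mul_sum]
    ring
  have hsum2 : ∑ j : Fin N, (Real.sin (θ j t - (z t).arg))^2 =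
      (∑ j : Fin N, (a * Real.sin (θ j t) - b * Real.cos (θ j t))^2) / R^2 := by
    rw [Finset.sum_div]
    apply Finset.sum_congr rfl
    intro j _
    rw [hsin j, div_pow]
  rw [hsum2, hsab]
  have hR0 : R ≠ 0 := hRpos.ne'
  have h2 : W.re * a + a * W.re + (W.im * b + b * W.im)
      = 2 * ((1 / (N:ℝ)) * ∑ j : Fin N, (a * Real.sin (θ j t) - b * Real.cos (θ j t))^2) := by
    rw [← key]; ring
  rw [h2]
  field_simp
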